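/- Every nonzero finite-dimensional simple module V over U_q(ĝl_{m|n,s}) is a highest weight module: there exist a nonzero vector ζ ∈ V and complex numbers λ_i^{(r)}, λ̄_i^{(r)} (1 ≤ i ≤ N, r ≥ 0) such that t_{ij}^{(r)} ζ = t̄_{ij}^{(r)} ζ = 0 for all 1 ≤ i < j ≤ N and r ≥ 0, t_{ii}^{(r)} ζ = λ_i^{(r)} ζ and t̄_{ii}^{(r)} ζ = λ̄_i^{(r)} ζ for all i, r, and ζ generates V. -/

import Mathlib

namespace Stmt14

noncomputable section

/-- `(-1)^x` for `x : ZMod 2`. -/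
def neg1 (x : ZMod 2) : ℂ := if x = 0 then 1 else -1

/-- `q_i = q^{d_i}` where `d_i = (-1)^{s_i}`. -/
def qp (q : ℂ) (s : ℕ → ZMod 2) (i : ℕ) : ℂ := if s i = 0 then q else q⁻¹

/-- The sign `ς_{ab;cd} = (−1)^{(|a|+|b|)(|c|+|d|)}`. -/
def sg (s : ℕ → ZMod 2) (a b c d : ℕ) : ℂ := neg1 ((s a + s b) * (s c + s d))

/-- `i` lies in the index range `{1, …, Nn}`. -/
def inR (Nn i : ℕ) : Prop := 1 ≤ i ∧ i ≤ Nn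

/-- Generators `t_{ij}^{(r)}`, `t̄_{ij}^{(r)}` of the quantum affine general linear
superalgebra. -/
inductive AGen : Type
  | t : ℕ → ℕ → ℕ → AGen
  | tb : ℕ → ℕ → ℕ → AGen

/-- The free algebra on the affine generators. -/
abbrev AFA : Type := FreeAlgebra ℂ AGen

/-- The generator `t_{ij}^{(r)}` in the free algebra. -/
def fat (i j r : ℕ) : AFA := FreeAlgebra.ι ℂ (AGen.t i j r)

/-- The generator `t̄_{ij}^{(r)}` in the free algebra. -/
def fab (i j r : ℕ) : AFA := FreeAlgebra.ι ℂ (AGen.tb i j r)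

/-- The coefficient of `u^e` in the series `γ_{ij}(u)`, where `g = false` selects
`t_{ij}(u) = Σ_{r≥0} t_{ij}^{(r)} u^{−r}` and `g = true` selects
`t̄_{ij}(u) = Σ_{r≥0} t̄_{ij}^{(r)} u^{r}`. -/
def acf (g : Bool) (i j : ℕ) (e : ℤ) : AFA :=
  if g then (if 0 ≤ e then fab i j e.toNat else 0)
  else (if e ≤ 0 then fat i j (-e).toNat else 0)

/-- The coefficient of `u^x v^y` in the left-hand side of the RTT series identity
`(q_i^{−δ_{ik}} v − q_i^{δ_{ik}} u) γ_{ij}(u) γ'_{kl}(v)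
 − ς_{ij;kl} (q_j^{−δ_{jl}} v − q_j^{δ_{jl}} u) γ'_{kl}(v) γ_{ij}(u)`,
for series with coefficient functions `c` (in `u`) and `c'` (in `v`). -/
def relL {A : Type} [Ring A] [Algebra ℂ A] (q : ℂ) (s : ℕ → ZMod 2)
    (c c' : ℕ → ℕ → ℤ → A) (i j k l : ℕ) (x y : ℤ) : A :=
  (if i = k then (qp q s i)⁻¹ else 1) • (c i j x * c' k l (y - 1))
    - (if i = k then qp q s i else 1) • (c i j (x - 1) * c' k l y)
    - (sg s i j k l * (if j = l then (qp q s j)⁻¹ else 1)) • (c' k l (y - 1) * c i j x)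
    + (sg s i j k l * (if j = l then qp q s j else 1)) • (c' k l y * c i j (x - 1))

/-- The coefficient of `u^x v^y` in the right-hand side of the RTT series identity
`ς_{ik;kl} (q_k − q_k^{−1}) ((δ_{k<i} u + δ_{i<k} v) γ_{kj}(u) γ'_{il}(v)
 − (δ_{j<l} u + δ_{l<j} v) γ'_{kj}(v) γ_{il}(u))`. -/
def relR {A : Type} [Ring A] [Algebra ℂ A] (q : ℂ) (s : ℕ → ZMod 2)
    (c c' : ℕ → ℕ → ℤ → A) (i j k l : ℕ) (x y : ℤ) : A :=
  (sg s i k k l * (qp q s k - (qp q s k)⁻¹)) •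
    ((if k < i then (1 : ℂ) else 0) • (c k j (x - 1) * c' i l y)
      + (if i < k then (1 : ℂ) else 0) • (c k j x * c' i l (y - 1))
      - (if j < l then (1 : ℂ) else 0) • (c' k j y * c i l (x - 1))
      - (if l < j then (1 : ℂ) else 0) • (c' k j (y - 1) * c i l x))

/-- Defining relations of the quantum affine general linear superalgebra
`U_q(ĝl_{m|n,s})` (trivial central charge). -/
inductive ARel (Nn : ℕ) (q : ℂ) (s : ℕ → ZMod 2) : AFA → AFA → Prop
  | zt : ∀ i j r : ℕ, ¬ (inR Nn i ∧ inR Nn j) → ARel Nn q s (fat i j r) 0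
  | zb : ∀ i j r : ℕ, ¬ (inR Nn i ∧ inR Nn j) → ARel Nn q s (fab i j r) 0
  | zt0 : ∀ i j : ℕ, i < j → ARel Nn q s (fat i j 0) 0
  | zb0 : ∀ i j : ℕ, j < i → ARel Nn q s (fab i j 0) 0
  | unit_tb : ∀ i : ℕ, inR Nn i → ARel Nn q s (fat i i 0 * fab i i 0) 1
  | unit_bt : ∀ i : ℕ, inR Nn i → ARel Nn q s (fab i i 0 * fat i i 0) 1
  | rtt : ∀ g g' : Bool, ¬ (g = true ∧ g' = false) → ∀ i j k l : ℕ,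
      inR Nn i → inR Nn j → inR Nn k → inR Nn l → ∀ x y : ℤ,
      ARel Nn q s (relL q s (acf g) (acf g') i j k l x y)
        (relR q s (acf g) (acf g') i j k l x y)

/-- The quantum affine general linear superalgebra `U_q(ĝl_{m|n,s})`. -/
abbrev UA (Nn : ℕ) (q : ℂ) (s : ℕ → ZMod 2) : Type := RingQuot (ARel Nn q s)

/-- The generator `t_{ij}^{(r)}` of `U_q(ĝl_{m|n,s})`. -/
def AT (Nn : ℕ) (q : ℂ) (s : ℕ → ZMod 2) (i j r : ℕ) : UA Nn q s :=
  RingQuot.mkAlgHom ℂ (ARel Nn q s) (fat i j r)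

/-- The generator `t̄_{ij}^{(r)}` of `U_q(ĝl_{m|n,s})`. -/
def AB (Nn : ℕ) (q : ℂ) (s : ℕ → ZMod 2) (i j r : ℕ) : UA Nn q s :=
  RingQuot.mkAlgHom ℂ (ARel Nn q s) (fab i j r)



/-- Cancellation lemma, "upward" version: vanishing for large first index. -/
theorem cancelUp {V : Type} [AddCommGroup V] [Module ℂ V] (Z : ℤ → ℤ → V) (c : ℂ)
    (hc : c ≠ 0) (hrec : ∀ x y : ℤ, Z x (y - 1) = c • Z (x - 1) y)
    (M : ℤ) (hvan : ∀ x y : ℤ, M ≤ x → Z x y = 0) : ∀ x y : ℤ, Z x y = 0 := by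
  have key : ∀ k : ℕ, ∀ x y : ℤ, Z x y = (c⁻¹) ^ k • Z (x + k) (y - k) := by
    intro k
    induction k with
    | zero => intro x y; simp
    | succ n ih =>
      intro x y
      have h1 : Z x y = c⁻¹ • Z (x + 1) (y - 1) := by
        have := hrec (x + 1) y
        simp only [add_sub_cancel_right] at this
        rw [this, ← smul_assoc, smul_eq_mul, inv_mul_cancel₀ hc, one_smul]
      rw [h1, ih (x + 1) (y - 1), ← smul_assoc, smul_eq_mul, ← pow_succ']
      congr 1 <;> push_cast <;> ring
  intro x y
  obtain ⟨k, hk⟩ : ∃ k : ℕ, M ≤ x + k := ⟨(M - x).toNat, by omega⟩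
  rw [key k x y, hvan _ _ hk, smul_zero]

/-- Cancellation lemma, "downward" version: vanishing for small first index. -/
theorem cancelDown {V : Type} [AddCommGroup V] [Module ℂ V] (Z : ℤ → ℤ → V) (c : ℂ)
    (hrec : ∀ x y : ℤ, Z x (y - 1) = c • Z (x - 1) y)
    (M : ℤ) (hvan : ∀ x y : ℤ, x ≤ M → Z x y = 0) : ∀ x y : ℤ, Z x y = 0 := by
  have key : ∀ k : ℕ, ∀ x y : ℤ, Z x y = c ^ k • Z (x - k) (y + k) := by
    intro k
    induction k with
    | zero => intro x y; simp
    | succ n ih =>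
      intro x y
      have h1 : Z x y = c • Z (x - 1) (y + 1) := by
        have := hrec x (y + 1)
        simpa using this
      rw [h1, ih (x - 1) (y + 1), ← smul_assoc]
      have : (x - 1 - n) = x - (n + 1 : ℕ) := by push_cast; ring
      rw [this]
      have : (y + 1 + n) = y + (n + 1 : ℕ) := by push_cast; ring
      rw [this, smul_eq_mul, ← pow_succ']
  intro x y
  obtain ⟨k, hk⟩ : ∃ k : ℕ, x - k ≤ M := ⟨(x - M).toNat, by omega⟩
  rw [key k x y, hvan _ _ hk, smul_zero]


open Module

theorem commFamily_aux {V : Type} [AddCommGroup V] [Module ℂ V] [FiniteDimensional ℂ V]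
    {ι : Type} (F : ι → Module.End ℂ V) (hcomm : ∀ i j, Commute (F i) (F j)) :
    ∀ (k : ℕ) (p : Submodule ℂ V), Module.finrank ℂ p ≤ k → p ≠ ⊥ →
      (∀ i, ∀ v ∈ p, F i v ∈ p) →
      ∃ w, w ∈ p ∧ w ≠ 0 ∧ ∀ i, ∃ c : ℂ, F i w = c • w := by
  intro k
  induction k with
  | zero =>
    intro p hrk hne _
    exfalso
    exact hne (Submodule.finrank_eq_zero.mp (Nat.le_zero.mp hrk))
  | succ n ih =>
    intro p hrk hne hinv
    have hinv' : ∀ i, ∀ v ∈ p, F i v ∈ p := hinv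
    set F' : ι → Module.End ℂ p := fun i => (F i).restrict (hinv i) with hF'
    by_cases hsc : ∀ i, ∃ c : ℂ, F' i = c • (1 : Module.End ℂ p)
    · obtain ⟨w, hwp, hw0⟩ := Submodule.exists_mem_ne_zero_of_ne_bot hne
      refine ⟨w, hwp, hw0, fun i => ?_⟩
      obtain ⟨c, hc⟩ := hsc i
      refine ⟨c, ?_⟩
      have := congrArg (fun f => ((f ⟨w, hwp⟩ : p) : V)) hc
      simpa [LinearMap.restrict_apply, F'] using this
    · push_neg at hsc
      obtain ⟨i₀, hi₀⟩ := hsc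
      haveI : Nontrivial p := Submodule.nontrivial_iff_ne_bot.mpr hne
      obtain ⟨μ, hμ⟩ := Module.End.exists_eigenvalue (F' i₀)
      set W' : Submodule ℂ p := Module.End.eigenspace (F' i₀) μ with hW'
      have hW'ne : W' ≠ ⊥ := hμ
      have hW'top : W' ≠ ⊤ := by
        intro htop
        apply hi₀ μ
        ext v
        have hv : F' i₀ v = μ • v := Module.End.mem_eigenspace_iff.mp
          ((le_of_eq htop.symm) Submodule.mem_top)
        simp [hv]
      set p' : Submodule ℂ V := W'.map p.subtype with hp'
      have hp'le : p' ≤ p := by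
        rintro v ⟨w', _, rfl⟩; exact w'.2
      have hp'lt : p' < p := by
        refine lt_of_le_of_ne hp'le ?_
        intro heq
        apply hW'top
        have hall : ∀ w' : p, w' ∈ W' := by
          intro w'
          have hmem : (w' : V) ∈ p' := heq.symm ▸ w'.2
          obtain ⟨w'', hw'', hww⟩ := hmem
          have hww' : w'' = w' := Subtype.ext hww
          exact hww' ▸ hw''
        exact Submodule.eq_top_iff'.mpr hall
      have hp'ne : p' ≠ ⊥ := by
        intro hbot
        apply hW'ne
        rw [Submodule.eq_bot_iff] at hbot ⊢
        intro w' hw'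
        exact Subtype.ext (hbot _ ⟨w', hw', rfl⟩)
      have hrk' : Module.finrank ℂ p' ≤ n := by
        have h1 := Submodule.finrank_lt_finrank_of_lt (t := p) hp'lt
        omega
      have hp'inv : ∀ i, ∀ v ∈ p', F i v ∈ p' := by
        intro i v hv
        obtain ⟨w', hw', rfl⟩ := hv
        have hw'' : w' ∈ W' := hw'
        have hmem : F' i w' ∈ W' := by
          rw [hW', Module.End.mem_eigenspace_iff]
          have hcm : F' i₀ (F' i w') = F' i (F' i₀ w') := by
            apply Subtype.ext
            simpa [F', LinearMap.restrict_apply] using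
              congrArg (fun f => f (w' : V)) (hcomm i₀ i).eq
          rw [hcm, Module.End.mem_eigenspace_iff.mp hw'', map_smul]
        exact ⟨F' i w', hmem, rfl⟩
      obtain ⟨w, hwp', hw0, hev⟩ := ih p' hrk' hp'ne hp'inv
      exact ⟨w, hp'le hwp', hw0, hev⟩

theorem commFamily_eigenvector {V : Type} [AddCommGroup V] [Module ℂ V] [FiniteDimensional ℂ V]
    {ι : Type} (F : ι → Module.End ℂ V) (hcomm : ∀ i j, Commute (F i) (F j))
    (p : Submodule ℂ V) (hne : p ≠ ⊥) (hinv : ∀ i, ∀ v ∈ p, F i v ∈ p) :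
    ∃ w, w ∈ p ∧ w ≠ 0 ∧ ∀ i, ∃ c : ℂ, F i w = c • w :=
  commFamily_aux F hcomm (Module.finrank ℂ p) p le_rfl hne hinv

section Tool

variable {Nn : ℕ} {q : ℂ} {s : ℕ → ZMod 2} {V : Type} [AddCommGroup V] [Module ℂ V]

/-- Image of the series coefficient `acf g i j z` under a representation. -/
def op (ρ : UA Nn q s →ₐ[ℂ] Module.End ℂ V) (g : Bool) (i j : ℕ) (z : ℤ) :
    Module.End ℂ V :=
  ρ (RingQuot.mkAlgHom ℂ (ARel Nn q s) (acf g i j z))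

variable (ρ : UA Nn q s →ₐ[ℂ] Module.End ℂ V)

theorem opF_pos {z : ℤ} (hz : 0 < z) (i j : ℕ) : op ρ false i j z = 0 := by
  simp [op, acf, not_le.mpr hz]

theorem opT_neg {z : ℤ} (hz : z < 0) (i j : ℕ) : op ρ true i j z = 0 := by
  simp [op, acf, not_le.mpr hz]

theorem opF_AT {z : ℤ} (hz : z ≤ 0) (i j : ℕ) :
    op ρ false i j z = ρ (AT Nn q s i j (-z).toNat) := by
  simp [op, acf, hz, AT]

theorem opT_AB {z : ℤ} (hz : 0 ≤ z) (i j : ℕ) :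
    op ρ true i j z = ρ (AB Nn q s i j z.toNat) := by
  simp [op, acf, hz, AB]

theorem AT_op (i j r : ℕ) : ρ (AT Nn q s i j r) = op ρ false i j (-(r : ℤ)) := by
  rw [opF_AT ρ (by omega)]
  simp

theorem AB_op (i j r : ℕ) : ρ (AB Nn q s i j r) = op ρ true i j (r : ℤ) := by
  rw [opT_AB ρ (by omega)]
  simp

theorem opF_zt0 {i j : ℕ} (h : i < j) : op ρ false i j 0 = 0 := by
  have := RingQuot.mkAlgHom_rel ℂ (ARel.zt0 (Nn := Nn) (q := q) (s := s) i j h)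
  have h2 := congrArg ρ this
  simp only [map_zero] at h2
  simpa [op, acf] using h2

theorem opT_zb0 {i j : ℕ} (h : j < i) : op ρ true i j 0 = 0 := by
  have := RingQuot.mkAlgHom_rel ℂ (ARel.zb0 (Nn := Nn) (q := q) (s := s) i j h)
  have h2 := congrArg ρ this
  simp only [map_zero] at h2
  simpa [op, acf] using h2

theorem op_out {i j : ℕ} (h : ¬(inR Nn i ∧ inR Nn j)) (g : Bool) (z : ℤ) :
    op ρ g i j z = 0 := by
  cases g with
  | false =>
    rcases le_or_gt z 0 with hz | hz
    · have := RingQuot.mkAlgHom_rel ℂ (ARel.zt (Nn := Nn) (q := q) (s := s) i j (-z).toNat h)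
      have h2 := congrArg ρ this
      simp only [map_zero] at h2
      rw [opF_AT ρ hz]
      exact h2
    · exact opF_pos ρ hz i j
  | true =>
    rcases le_or_gt 0 z with hz | hz
    · have := RingQuot.mkAlgHom_rel ℂ (ARel.zb (Nn := Nn) (q := q) (s := s) i j z.toNat h)
      have h2 := congrArg ρ this
      simp only [map_zero] at h2
      rw [opT_AB ρ hz]
      exact h2
    · exact opT_neg ρ hz i j

theorem unit_op {a : ℕ} (ha : inR Nn a) :
    op ρ false a a 0 * op ρ true a a 0 = 1 := by
  have := RingQuot.mkAlgHom_rel ℂ (ARel.unit_tb (Nn := Nn) (q := q) (s := s) a ha)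
  have h2 := congrArg ρ this
  simp only [map_mul, map_one] at h2
  simpa [op, acf] using h2

theorem unit_op' {a : ℕ} (ha : inR Nn a) :
    op ρ true a a 0 * op ρ false a a 0 = 1 := by
  have := RingQuot.mkAlgHom_rel ℂ (ARel.unit_bt (Nn := Nn) (q := q) (s := s) a ha)
  have h2 := congrArg ρ this
  simp only [map_mul, map_one] at h2
  simpa [op, acf] using h2

theorem rtt_vec (g g' : Bool) (hg : ¬(g = true ∧ g' = false)) {i j k l : ℕ}
    (hi : inR Nn i) (hj : inR Nn j) (hk : inR Nn k) (hl : inR Nn l) (x y : ℤ) (v : V) :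
    (if i = k then (qp q s i)⁻¹ else 1) • op ρ g i j x (op ρ g' k l (y - 1) v)
      - (if i = k then qp q s i else 1) • op ρ g i j (x - 1) (op ρ g' k l y v)
      - (sg s i j k l * (if j = l then (qp q s j)⁻¹ else 1)) •
          op ρ g' k l (y - 1) (op ρ g i j x v)
      + (sg s i j k l * (if j = l then qp q s j else 1)) •
          op ρ g' k l y (op ρ g i j (x - 1) v)
    = (sg s i k k l * (qp q s k - (qp q s k)⁻¹)) •
        ((if k < i then (1 : ℂ) else 0) • op ρ g k j (x - 1) (op ρ g' i l y v)
          + (if i < k then (1 : ℂ) else 0) • op ρ g k j x (op ρ g' i l (y - 1) v)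
          - (if j < l then (1 : ℂ) else 0) • op ρ g' k j y (op ρ g i l (x - 1) v)
          - (if l < j then (1 : ℂ) else 0) • op ρ g' k j (y - 1) (op ρ g i l x v)) := by
  have h := RingQuot.mkAlgHom_rel ℂ (ARel.rtt (Nn := Nn) (q := q) (s := s)
    g g' hg i j k l hi hj hk hl x y)
  have h2 := congrArg ρ h
  have h3 := LinearMap.congr_fun h2 v
  simpa only [relL, relR, map_sub, map_add, map_smul, map_mul, op,
    LinearMap.sub_apply, LinearMap.add_apply, LinearMap.smul_apply,
    Module.End.mul_apply] using h3

end Tool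
section Tool2

variable {Nn : ℕ} {q : ℂ} {s : ℕ → ZMod 2} {V : Type} [AddCommGroup V] [Module ℂ V]

theorem zmod2_cases (x : ZMod 2) : x = 0 ∨ x = 1 := by
  revert x; decide

theorem zmod2_add_self (x : ZMod 2) : x + x = 0 := by
  revert x; decide

theorem neg1_zero : neg1 0 = 1 := by simp [neg1]

theorem sg_left (a c d : ℕ) : sg s a a c d = 1 := by
  simp [sg, zmod2_add_self, neg1]

theorem sg_right (a b c : ℕ) : sg s a b c c = 1 := by
  simp [sg, zmod2_add_self, neg1]

theorem sg_mix (p r : ℕ) : sg s p r r p = neg1 (s p + s r) := by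
  have h : ∀ x : ZMod 2, x * x = x := by decide
  rw [sg, show s r + s p = s p + s r from add_comm _ _, h]

theorem neg1_sq (x : ZMod 2) : neg1 x * neg1 x = 1 := by
  rcases zmod2_cases x with h | h <;> simp [h, neg1]

theorem qp_ne (hq0 : q ≠ 0) (a : ℕ) : qp q s a ≠ 0 := by
  unfold qp; split <;> simp [hq0]

theorem sign_kappa (hq0 : q ≠ 0) (p r : ℕ) :
    neg1 (s p + s r) * (qp q s p - (qp q s p)⁻¹) = qp q s r - (qp q s r)⁻¹ := by
  rcases zmod2_cases (s p) with hp | hp <;> rcases zmod2_cases (s r) with hr | hr <;>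
    simp [hp, hr, neg1, qp, inv_inv, (by decide : (1 + 1 : ZMod 2) = 0),
      (by decide : (0 + 1 : ZMod 2) = 0 ↔ False), (by decide : (1 + 0 : ZMod 2) = 0 ↔ False)] <;>
    ring

theorem kappa_sq (hq0 : q ≠ 0) (r : ℕ) :
    (qp q s r - (qp q s r)⁻¹) * (qp q s r - (qp q s r)⁻¹) = q * q + q⁻¹ * q⁻¹ - 2 := by
  rcases zmod2_cases (s r) with hr | hr
  · simp [hr, qp]
    linear_combination (-2 : ℂ) * mul_inv_cancel₀ hq0
  · simp [hr, qp, inv_inv]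
    linear_combination (-2 : ℂ) * mul_inv_cancel₀ hq0

variable (ρ : UA Nn q s →ₐ[ℂ] Module.End ℂ V)

/-- Commutation of `t_{aa}^{(0)}` with arbitrary generators (weight structure). -/
theorem weight_comm (g' : Bool) {a b c : ℕ} (ha : inR Nn a) (hb : inR Nn b)
    (hc : inR Nn c) (y : ℤ) (v : V) :
    (if a = b then qp q s a else 1) • op ρ false a a 0 (op ρ g' b c y v)
      = (if a = c then qp q s a else 1) • op ρ g' b c y (op ρ false a a 0 v) := by
  have h := rtt_vec ρ false g' (by simp) ha ha hb hc 1 y v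
  simp only [opF_pos ρ one_pos, show (1 : ℤ) - 1 = 0 from rfl, LinearMap.zero_apply,
    map_zero, smul_zero, zero_sub, sg_left] at h
  -- the RHS of h vanishes
  have hz1 : (if b < a then (1:ℂ) else 0) • op ρ false b a 0 (op ρ g' a c y v) = 0 := by
    by_cases hba : b < a
    · rw [opF_zt0 ρ hba]; simp
    · simp [hba]
  have hz2 : (if a < c then (1:ℂ) else 0) • op ρ g' b a y (op ρ false a c 0 v) = 0 := by
    by_cases hac : a < c
    · rw [opF_zt0 ρ hac]; simp [hac]
    · simp [hac]
  simp only [hz1, hz2, one_mul, zero_add, sub_zero, smul_zero, zero_sub] at h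
  linear_combination (norm := module) -h

end Tool2
section Tool3

variable {Nn : ℕ} {q : ℂ} {s : ℕ → ZMod 2} {V : Type} [AddCommGroup V] [Module ℂ V]
variable (ρ : UA Nn q s →ₐ[ℂ] Module.End ℂ V)

/-- `v` is annihilated by all raising operators. -/
def KillsRaisers (v : V) : Prop :=
  ∀ (g : Bool) (b c : ℕ) (z : ℤ), b < c → inR Nn b → inR Nn c → op ρ g b c z v = 0

/-- Same-index diagonal commutation (holds on any vector). -/
theorem diag_comm_same (hq0 : q ≠ 0) (g g' : Bool) (hg : ¬(g = true ∧ g' = false))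
    {p : ℕ} (hp : inR Nn p) (v : V) (a b : ℤ) :
    op ρ g p p a (op ρ g' p p b v) = op ρ g' p p b (op ρ g p p a v) := by
  set W : ℤ → ℤ → V := fun x y =>
    op ρ g p p x (op ρ g' p p y v) - op ρ g' p p y (op ρ g p p x v) with hW
  have hrec : ∀ x y : ℤ, W x (y - 1) = (qp q s p * qp q s p) • W (x - 1) y := by
    intro x y
    have h := rtt_vec ρ g g' hg hp hp hp hp x y v
    simp only [eq_self_iff_true, if_true, lt_self_iff_false, if_false, sg_left, one_mul,
      zero_smul, add_zero, sub_zero, zero_sub, smul_zero, neg_zero, zero_add] at h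
    have h2 := congrArg (fun w => (qp q s p) • w) h
    simp only [smul_add, smul_sub, smul_neg, smul_smul,
      mul_inv_cancel₀ (qp_ne hq0 p), one_smul, smul_zero] at h2
    simp only [hW]
    linear_combination (norm := module) h2
  have hzero : ∀ x y : ℤ, W x y = 0 := by
    cases g with
    | false =>
      refine cancelUp W _ (by simp [mul_ne_zero (qp_ne hq0 p) (qp_ne hq0 p)]) hrec 1 ?_
      intro x y hx
      simp only [hW, opF_pos ρ (by omega : (0:ℤ) < x), LinearMap.zero_apply, map_zero,
        sub_zero, sub_self]
    | true =>
      have hg' : g' = true := by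
        cases g' with
        | false => exact absurd ⟨rfl, rfl⟩ hg
        | true => rfl
      subst hg'
      refine cancelDown W _ hrec (-1) ?_
      intro x y hx
      simp only [hW, opT_neg ρ (by omega : x < 0), LinearMap.zero_apply, map_zero,
        sub_zero, sub_self]
  have := hzero a b
  rw [hW] at this
  exact sub_eq_zero.mp this

/-- Good-pair diagonal commutation on a highest-weight-type vector: `p < r`. -/
theorem diag_comm_good (g g' : Bool) (hg : ¬(g = true ∧ g' = false))
    {p r : ℕ} (hp : inR Nn p) (hr : inR Nn r) (hpr : p < r)
    (v : V) (hv : KillsRaisers ρ v) (a b : ℤ) :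
    op ρ g p p a (op ρ g' r r b v) = op ρ g' r r b (op ρ g p p a v) := by
  have hne : p ≠ r := by omega
  have hv' : ∀ (g₀ : Bool) (z : ℤ), op ρ g₀ p r z v = 0 := fun g₀ z => hv g₀ p r z hpr hp hr
  set W : ℤ → ℤ → V := fun x y =>
    op ρ g p p x (op ρ g' r r y v) - op ρ g' r r y (op ρ g p p x v) with hW
  have hrec : ∀ x y : ℤ, W x (y - 1) = (1 : ℂ) • W (x - 1) y := by
    intro x y
    have h := rtt_vec ρ g g' hg hp hp hr hr x y v
    simp only [if_true, if_false, eq_self_iff_true, lt_self_iff_false, if_neg hne,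
      sg_left, sg_right, one_mul, one_smul, if_pos hpr,
      if_neg (by omega : ¬r < p), zero_smul, smul_zero, zero_add, add_zero, sub_zero,
      zero_sub, hv', map_zero] at h
    simp only [hW, one_smul]
    linear_combination (norm := module) h
  have hzero : ∀ x y : ℤ, W x y = 0 := by
    cases g with
    | false =>
      refine cancelUp W _ one_ne_zero hrec 1 ?_
      intro x y hx
      simp only [hW, opF_pos ρ (by omega : (0:ℤ) < x), LinearMap.zero_apply, map_zero,
        sub_zero, sub_self]
    | true =>
      have hg' : g' = true := by
        cases g' with
        | false => exact absurd ⟨rfl, rfl⟩ hg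
        | true => rfl
      subst hg'
      refine cancelDown W _ hrec (-1) ?_
      intro x y hx
      simp only [hW, opT_neg ρ (by omega : x < 0), LinearMap.zero_apply, map_zero,
        sub_zero, sub_self]
  have := hzero a b
  rw [hW] at this
  exact sub_eq_zero.mp this

/-- Bad-pair diagonal commutation on a highest-weight-type vector:
`t_{pp}` against `t̄_{rr}` with `r < p`. -/
theorem diag_comm_bad (hq0 : q ≠ 0) {p r : ℕ} (hp : inR Nn p) (hr : inR Nn r)
    (hrp : r < p) (v : V) (hv : KillsRaisers ρ v) (a b : ℤ) :
    op ρ false p p a (op ρ true r r b v) = op ρ true r r b (op ρ false p p a v) := by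
  have hne : p ≠ r := by omega
  have hne' : r ≠ p := by omega
  have hnlt : ¬p < r := by omega
  have hv' : ∀ (g₀ : Bool) (z : ℤ), op ρ g₀ r p z v = 0 := fun g₀ z => hv g₀ r p z hrp hr hp
  set κ : ℂ := qp q s r - (qp q s r)⁻¹ with hκ
  set σ : ℂ := neg1 (s p + s r) with hσdef
  have hσσ : σ * σ = 1 := neg1_sq _
  set X : ℤ → ℤ → V := fun x y => op ρ false p p x (op ρ true r r y v) with hX
  set Y : ℤ → ℤ → V := fun x y => op ρ true r r y (op ρ false p p x v) with hY
  set X' : ℤ → ℤ → V := fun x y => op ρ false r r x (op ρ true p p y v) with hX'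
  set Y' : ℤ → ℤ → V := fun x y => op ρ true p p y (op ρ false r r x v) with hY'
  set P : ℤ → ℤ → V := fun x y => op ρ false r p x (op ρ true p r y v) with hP
  set Qq : ℤ → ℤ → V := fun x y => op ρ true r p y (op ρ false p r x v) with hQq
  -- K1 : relation (t, t̄) at (p,p,r,r)
  have K1 : ∀ x y : ℤ, X x (y-1) - X (x-1) y - Y x (y-1) + Y (x-1) y
      = κ • (P (x-1) y - Qq x (y-1)) := by
    intro x y
    have h := rtt_vec ρ false true (by simp) hp hp hr hr x y v
    simp only [if_true, if_false, eq_self_iff_true, lt_self_iff_false, if_neg hne, sg_left, sg_right, one_mul, one_smul, if_pos hrp,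
      if_neg hnlt, zero_smul, smul_zero, zero_add, add_zero, sub_zero] at h
    simp only [hX, hY, hP, hQq, hκ]
    linear_combination (norm := module) h
  -- K2 : relation (t, t̄) at (r,r,p,p); right factors are raisers
  have K2 : ∀ x y : ℤ, X' x y = Y' x y := by
    set W2 : ℤ → ℤ → V := fun x y => X' x y - Y' x y with hW2
    have hrec : ∀ x y : ℤ, W2 x (y - 1) = (1 : ℂ) • W2 (x - 1) y := by
      intro x y
      have h := rtt_vec ρ false true (by simp) hr hr hp hp x y v
      simp only [if_true, if_false, eq_self_iff_true, lt_self_iff_false, if_neg hne', sg_left, sg_right, one_mul, one_smul, if_pos hrp,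
        if_neg hnlt, zero_smul, smul_zero, zero_add, add_zero, sub_zero, zero_sub,
        hv', map_zero] at h
      simp only [hW2, hX', hY', one_smul]
      linear_combination (norm := module) h
    have hzero := cancelUp W2 1 one_ne_zero hrec 1 (by
      intro x y hx
      simp only [hW2, hX', hY', opF_pos ρ (by omega : (0:ℤ) < x), LinearMap.zero_apply,
        map_zero, sub_self])
    intro x y
    have := hzero x y
    rw [hW2] at this
    exact sub_eq_zero.mp this
  -- K3 : relation (t, t̄) at (p,r,r,p)
  have K3 : ∀ x y : ℤ, Qq x (y-1) - Qq (x-1) y = κ • (Y (x-1) y - X' (x-1) y) := by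
    intro x y
    have h := rtt_vec ρ false true (by simp) hp hr hr hp x y v
    simp only [if_true, if_false, eq_self_iff_true, lt_self_iff_false, if_neg hne, if_neg hne', sg_mix, one_mul, one_smul, if_pos hrp,
      if_neg hnlt, zero_smul, smul_zero, zero_add, add_zero, sub_zero, zero_sub,
      hv', map_zero] at h
    -- h : -(σ • Qq x (y-1)) + σ • Qq (x-1) y = (σ * κ) • (X' (x-1) y - Y (x-1) y)
    rw [← hσdef] at h
    have h2 := congrArg (fun w => σ • w) h
    simp only [smul_add, smul_neg, smul_sub, smul_smul, ← mul_assoc, hσσ, one_mul,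
      one_smul] at h2
    simp only [hQq, hY, hX', hκ]
    linear_combination (norm := module) -h2
  -- K4 : relation (t, t̄) at (r,p,p,r)
  have K4 : ∀ x y : ℤ, P x (y-1) - P (x-1) y = κ • (X x (y-1) - Y' x (y-1)) := by
    intro x y
    have h := rtt_vec ρ false true (by simp) hr hp hp hr x y v
    simp only [if_true, if_false, eq_self_iff_true, lt_self_iff_false, if_neg hne, if_neg hne', sg_mix, one_mul, one_smul, if_pos hrp,
      if_neg hnlt, zero_smul, smul_zero, zero_add, add_zero, sub_zero, zero_sub,
      hv', map_zero] at h
    -- h has scalar σ * (qp q s p - (qp q s p)⁻¹) on the right; convert via sign_kappa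
    have hsk : σ * (qp q s p - (qp q s p)⁻¹) = κ := by
      rw [hσdef, hκ]; exact sign_kappa hq0 p r
    simp only [hP, hX, hY']
    rw [show s r + s p = s p + s r from add_comm _ _] at h
    rw [← hσdef] at h
    rw [hsk] at h
    linear_combination (norm := module) h
  -- second-order recursion for Z = X - Y
  set Z : ℤ → ℤ → V := fun x y => X x y - Y x y with hZ
  have hZvan : ∀ x y : ℤ, 1 ≤ x → Z x y = 0 := by
    intro x y hx
    simp only [hZ, hX, hY, opF_pos ρ (by omega : (0:ℤ) < x), LinearMap.zero_apply,
      map_zero, sub_self]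
  have hZrec2 : ∀ x y : ℤ, Z x (y-2) - (κ * κ + 2) • Z (x-1) (y-1) + Z (x-2) y = 0 := by
    intro x y
    have h1 := K1 x (y-1)
    have h2 := K1 (x-1) y
    have h3 := K3 x (y-1)
    have h4 := K4 (x-1) y
    have h5 := K2 (x-1) (y-1)
    simp only [hZ, show ∀ t : ℤ, t - 1 - 1 = t - 2 from fun t => by ring] at h1 h2 h3 h4 ⊢
    linear_combination (norm := module) h1 - h2 + κ • h4 - κ • h3 + (κ * κ) • h5
  have hκ2 : κ * κ + 2 = q * q + q⁻¹ * q⁻¹ := by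
    rw [hκ, kappa_sq hq0 r]; ring
  rw [hκ2] at hZrec2
  have hqq : (q⁻¹ * q⁻¹) * (q * q) = 1 := by field_simp
  set Z1 : ℤ → ℤ → V := fun x y => Z x (y-1) - (q * q) • Z (x-1) y with hZ1
  have hZ1rec : ∀ x y : ℤ, Z1 x (y-1) = (q⁻¹ * q⁻¹) • Z1 (x-1) y := by
    intro x y
    have h := hZrec2 x y
    simp only [hZ1, smul_sub, smul_smul, hqq, one_smul,
      show ∀ t : ℤ, t - 1 - 1 = t - 2 from fun t => by ring]
    linear_combination (norm := module) h
  have hZ1zero : ∀ x y : ℤ, Z1 x y = 0 := by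
    refine cancelUp Z1 _ (by simp [hq0]) hZ1rec 2 ?_
    intro x y hx
    simp only [hZ1, hZvan x (y-1) (by omega), hZvan (x-1) y (by omega), smul_zero,
      sub_self]
  have hZrec1 : ∀ x y : ℤ, Z x (y-1) = (q * q) • Z (x-1) y := by
    intro x y
    have := hZ1zero x y
    simp only [hZ1] at this
    exact sub_eq_zero.mp this
  have hZzero : ∀ x y : ℤ, Z x y = 0 :=
    cancelUp Z _ (by simp [hq0]) hZrec1 1 hZvan
  have := hZzero a b
  simp only [hZ, hX, hY] at this
  exact sub_eq_zero.mp this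

end Tool3
section Main

variable {Nn : ℕ} {q : ℂ} {s : ℕ → ZMod 2} {V : Type} [AddCommGroup V] [Module ℂ V]

theorem eigenvalues_finite [FiniteDimensional ℂ V] (f : Module.End ℂ V) :
    {c : ℂ | f.HasEigenvalue c}.Finite := by
  haveI := Module.End.isIntegral (R := ℂ) (M := V)
  refine (Polynomial.finite_setOf_isRoot (p := minpoly ℂ f)
    (minpoly.ne_zero (Algebra.IsIntegral.isIntegral f))).subset ?_
  intro c hc
  exact Module.End.hasEigenvalue_iff_isRoot.mp hc

theorem zpow_eq_one_iff (hq0 : q ≠ 0) (hqru : ∀ k : ℕ, k ≠ 0 → q ^ k ≠ 1) :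
    ∀ z : ℤ, q ^ z = 1 → z = 0 := by
  have key : ∀ z : ℤ, 0 < z → q ^ z ≠ 1 := by
    intro z hz h1
    have h2 : q ^ z.toNat = 1 := by
      rw [← zpow_natCast, Int.toNat_of_nonneg (by omega)]
      exact h1
    exact hqru z.toNat (by omega) h2
  intro z hz
  by_contra h0
  rcases lt_or_gt_of_ne h0 with h | h
  · have : q ^ (-z) = 1 := by rw [zpow_neg, hz, inv_one]
    exact key (-z) (by omega) this
  · exact key z h hz

variable (ρ : UA Nn q s →ₐ[ℂ] Module.End ℂ V)

/-- `v` is a weight vector of weight `μ` (with respect to the `t_{aa}^{(0)}`). -/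
def IsWt (μ : ℕ → ℂ) (v : V) : Prop :=
  v ≠ 0 ∧ ∀ a, inR Nn a → op ρ false a a 0 v = μ a • v

/-- The weight shift effected by a raising operator `γ_{bc}`. -/
def shiftW (q : ℂ) (s : ℕ → ZMod 2) (b c : ℕ) (μ : ℕ → ℂ) : ℕ → ℂ := fun a =>
  (if a = c then qp q s a else 1) * (if a = b then qp q s a else 1)⁻¹ * μ a

theorem wt_val_ne (hq0 : q ≠ 0) {μ : ℕ → ℂ} {v : V} (h : IsWt ρ μ v) {a : ℕ}
    (ha : inR Nn a) : μ a ≠ 0 := by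
  intro h0
  obtain ⟨hv, hwt⟩ := h
  apply hv
  have h1 := LinearMap.congr_fun (unit_op' ρ ha) v
  rw [Module.End.mul_apply, Module.End.one_apply, hwt a ha, h0, zero_smul, map_zero] at h1
  exact h1.symm

theorem wt_shift (hq0 : q ≠ 0) {μ : ℕ → ℂ} {v : V} (h : IsWt ρ μ v) (g : Bool)
    {b c : ℕ} (hb : inR Nn b) (hc : inR Nn c) (z : ℤ) :
    op ρ g b c z v = 0 ∨ IsWt ρ (shiftW q s b c μ) (op ρ g b c z v) := by
  by_cases hw : op ρ g b c z v = 0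
  · exact Or.inl hw
  refine Or.inr ⟨hw, fun a ha => ?_⟩
  have hwc := weight_comm ρ g ha hb hc z v
  rw [h.2 a ha, map_smul] at hwc
  have hs : (if a = b then qp q s a else 1) ≠ 0 := by
    split
    · exact qp_ne hq0 a
    · exact one_ne_zero
  have h2 := congrArg (fun w => (if a = b then qp q s a else 1)⁻¹ • w) hwc
  simp only [smul_smul, inv_mul_cancel₀ hs, one_smul] at h2
  rw [h2, shiftW]
  congr 1
  ring

end Main
section Main2

variable {Nn : ℕ} {q : ℂ} {s : ℕ → ZMod 2} {V : Type} [AddCommGroup V] [Module ℂ V]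
variable (ρ : UA Nn q s →ₐ[ℂ] Module.End ℂ V)

theorem qp_zpow (a : ℕ) : qp q s a = q ^ (if s a = 0 then (1 : ℤ) else -1) := by
  unfold qp; split <;> simp

theorem diag_comm_all (hq0 : q ≠ 0) {v : V} (hv : KillsRaisers ρ v)
    (g g' : Bool) (p r : ℕ) (z z' : ℤ) :
    op ρ g p p z (op ρ g' r r z' v) = op ρ g' r r z' (op ρ g p p z v) := by
  by_cases hp : inR Nn p
  · by_cases hr : inR Nn r
    · rcases lt_trichotomy p r with hlt | heq | hgt
      · cases g with
        | false =>
          cases g' with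
          | false => exact diag_comm_good ρ false false (by simp) hp hr hlt v hv z z'
          | true => exact diag_comm_good ρ false true (by simp) hp hr hlt v hv z z'
        | true =>
          cases g' with
          | true => exact diag_comm_good ρ true true (by simp) hp hr hlt v hv z z'
          | false => exact (diag_comm_bad ρ hq0 hr hp hlt v hv z' z).symm
      · subst heq
        cases g with
        | false =>
          cases g' with
          | false => exact diag_comm_same ρ hq0 false false (by simp) hp v z z'
          | true => exact diag_comm_same ρ hq0 false true (by simp) hp v z z'
        | true =>
          cases g' with
          | true => exact diag_comm_same ρ hq0 true true (by simp) hp v z z'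
          | false => exact (diag_comm_same ρ hq0 false true (by simp) hp v z' z).symm
      · cases g with
        | false =>
          cases g' with
          | false => exact (diag_comm_good ρ false false (by simp) hr hp hgt v hv z' z).symm
          | true => exact diag_comm_bad ρ hq0 hp hr hgt v hv z z'
        | true =>
          cases g' with
          | true => exact (diag_comm_good ρ true true (by simp) hr hp hgt v hv z' z).symm
          | false => exact (diag_comm_good ρ false true (by simp) hr hp hgt v hv z' z).symm
    · have h0 : op ρ g' r r z' = 0 := op_out ρ (by tauto) g' z'
      rw [h0]
      simp
  · have h0 : op ρ g p p z = 0 := op_out ρ (by tauto) g z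
    rw [h0]
    simp

end Main2
/-- Every nonzero finite-dimensional simple module over
`U_q(ĝl_{m|n,s})` is a highest weight module. -/
theorem fd_simple_is_highest_weight (m n Nn : ℕ) (hNn : Nn = m + n) (hN2 : 2 ≤ Nn)
    (s : ℕ → ZMod 2)
    (hm : ((Finset.Icc 1 Nn).filter (fun i => s i = 0)).card = m)
    (hn : ((Finset.Icc 1 Nn).filter (fun i => s i = 1)).card = n)
    (q : ℂ) (hq0 : q ≠ 0) (hqru : ∀ k : ℕ, k ≠ 0 → q ^ k ≠ 1)
    (V : Type) [AddCommGroup V] [Module ℂ V] [FiniteDimensional ℂ V]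
    (ρ : UA Nn q s →ₐ[ℂ] Module.End ℂ V)
    (hne : ∃ v : V, v ≠ 0)
    (hirr : ∀ W : Submodule ℂ V,
      (∀ (x : UA Nn q s) (w : V), w ∈ W → ρ x w ∈ W) → W = ⊥ ∨ W = ⊤) :
    ∃ ζ : V, ζ ≠ 0 ∧ ∃ lam lamb : ℕ → ℕ → ℂ,
      (∀ i j r : ℕ, 1 ≤ i → i < j → j ≤ Nn →
        ρ (AT Nn q s i j r) ζ = 0 ∧ ρ (AB Nn q s i j r) ζ = 0) ∧
      (∀ i r : ℕ, 1 ≤ i → i ≤ Nn →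
        ρ (AT Nn q s i i r) ζ = lam i r • ζ ∧ ρ (AB Nn q s i i r) ζ = lamb i r • ζ) ∧
      Function.Surjective (fun x : UA Nn q s => ρ x ζ) := by
  haveI : Nontrivial V := by obtain ⟨v₀, h⟩ := hne; exact ⟨v₀, 0, h⟩
  -- Step 1: the operators t_{aa}^{(0)} pairwise commute.
  have hEcomm0 : ∀ a b : ℕ, Commute (op ρ false a a 0) (op ρ false b b 0) := by
    intro a b
    by_cases ha : inR Nn a
    · by_cases hb : inR Nn b
      · apply LinearMap.ext
        intro v
        have h := weight_comm ρ false ha hb hb 0 v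
        have hs : (if a = b then qp q s a else 1) ≠ 0 := by
          split
          · exact qp_ne hq0 a
          · exact one_ne_zero
        simp only [Module.End.mul_apply]
        exact smul_right_injective V hs h
      · have h0 : op ρ false b b 0 = 0 := op_out ρ (by tauto) false 0
        rw [h0]; exact (Commute.zero_right _)
    · have h0 : op ρ false a a 0 = 0 := op_out ρ (by tauto) false 0
      rw [h0]; exact (Commute.zero_left _)
  -- Step 2: an initial weight vector.
  obtain ⟨w₀, -, hw₀ne, hw₀ev⟩ := commFamily_eigenvector
    (fun a : ℕ => op ρ false a a 0) hEcomm0 ⊤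
    (by
      intro h
      obtain ⟨x, y, hxy⟩ := exists_pair_ne V
      apply hxy
      have hx : x ∈ (⊥ : Submodule ℂ V) := by rw [← h]; exact Submodule.mem_top
      have hy : y ∈ (⊥ : Submodule ℂ V) := by rw [← h]; exact Submodule.mem_top
      rw [Submodule.mem_bot] at hx hy
      rw [hx, hy])
    (fun i v _ => Submodule.mem_top)
  set μ₀ : ℕ → ℂ := fun a => Classical.choose (hw₀ev a) with hμ₀def
  have hμ₀ : IsWt ρ μ₀ w₀ := ⟨hw₀ne, fun a _ => Classical.choose_spec (hw₀ev a)⟩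
  -- Step 3: existence of a sink weight.
  set Wt : Set (ℕ → ℂ) := {μ | ∃ v : V, IsWt ρ μ v} with hWtdef
  have hμ₀Wt : μ₀ ∈ Wt := ⟨w₀, hμ₀⟩
  have hsink : ∃ μ ∈ Wt, ∀ b c : ℕ, inR Nn b → inR Nn c → b < c →
      shiftW q s b c μ ∉ Wt := by
    by_contra hall
    push_neg at hall
    choose bf cf hbf hcf hbcf hWtf using hall
    set seqF : {μ // μ ∈ Wt} → {μ // μ ∈ Wt} :=
      fun x => ⟨shiftW q s (bf x.1 x.2) (cf x.1 x.2) x.1, hWtf x.1 x.2⟩ with hseqF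
    set seq : ℕ → {μ // μ ∈ Wt} := fun n => seqF^[n] ⟨μ₀, hμ₀Wt⟩ with hseqdef
    set bk : ℕ → ℕ := fun k => bf (seq k).1 (seq k).2 with hbk
    set ck : ℕ → ℕ := fun k => cf (seq k).1 (seq k).2 with hck
    have hseq0 : (seq 0).1 = μ₀ := rfl
    have hseqS : ∀ k, (seq (k+1)).1 = shiftW q s (bk k) (ck k) (seq k).1 := by
      intro k
      show (seqF^[k+1] _).1 = _
      rw [Function.iterate_succ_apply']
    have hbkR : ∀ k, inR Nn (bk k) := fun k => hbf _ _
    have hckR : ∀ k, inR Nn (ck k) := fun k => hcf _ _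
    have hbck : ∀ k, bk k < ck k := fun k => hbcf _ _
    set d : ℕ → ℤ := fun a => if s a = 0 then 1 else -1 with hd
    have hdd : ∀ a, d a * d a = 1 := by
      intro a
      simp only [hd]
      split <;> norm_num
    set expn : ℕ → ℕ → ℤ := fun n => Nat.rec (fun _ => 0)
      (fun k acc a => acc a + (if a = ck k then d a else 0)
        - (if a = bk k then d a else 0)) n with hexpn
    have hexpnS : ∀ k a, expn (k+1) a = expn k a + (if a = ck k then d a else 0)
        - (if a = bk k then d a else 0) := fun k a => rfl
    -- weight values along the sequence
    have hval : ∀ k, ∀ a, inR Nn a → (seq k).1 a = q ^ (expn k a) * μ₀ a := by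
      intro k
      induction k with
      | zero => intro a _; simp [hexpn, hseq0]
      | succ j ih =>
        intro a ha
        rw [hseqS j, shiftW, ih a ha, hexpnS]
        have e1 : (if a = ck j then qp q s a else 1)
            = q ^ (if a = ck j then d a else 0) := by
          split
          · rw [qp_zpow, hd]
          · simp
        have e2 : (if a = bk j then qp q s a else 1)
            = q ^ (if a = bk j then d a else 0) := by
          split
          · rw [qp_zpow, hd]
          · simp
        rw [e1, e2]
        rw [show expn j a + (if a = ck j then d a else 0) - (if a = bk j then d a else 0)
          = (if a = ck j then d a else 0) + (-(if a = bk j then d a else 0)) + expn j a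
          from by ring]
        rw [zpow_add₀ hq0, zpow_add₀ hq0, zpow_neg]
        ring
    -- the potential function L
    set L : ℕ → ℤ := fun k => ∑ a ∈ Finset.Icc 1 Nn, (a : ℤ) * d a * expn k a with hL
    have hLstep : ∀ k, L (k+1) = L k + ((ck k : ℤ) - (bk k : ℤ)) := by
      intro k
      simp only [hL]
      have hrw : ∀ a ∈ Finset.Icc 1 Nn, (a : ℤ) * d a * expn (k+1) a
          = (a : ℤ) * d a * expn k a + ((if a = ck k then (a : ℤ) else 0)
            - (if a = bk k then (a : ℤ) else 0)) := by
        intro a _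
        rw [hexpnS]
        have h1 : (a : ℤ) * d a * (if a = ck k then d a else 0)
            = (if a = ck k then (a : ℤ) else 0) := by
          split
          · rw [mul_assoc, hdd]; ring
          · ring
        have h2 : (a : ℤ) * d a * (if a = bk k then d a else 0)
            = (if a = bk k then (a : ℤ) else 0) := by
          split
          · rw [mul_assoc, hdd]; ring
          · ring
        rw [mul_sub, mul_add, h1, h2]
        ring
      rw [Finset.sum_congr rfl hrw, Finset.sum_add_distrib, Finset.sum_sub_distrib,
        Finset.sum_ite_eq' _ (ck k) (fun a => (a : ℤ)),
        Finset.sum_ite_eq' _ (bk k) (fun a => (a : ℤ))]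
      have hc : ck k ∈ Finset.Icc 1 Nn :=
        Finset.mem_Icc.mpr ⟨(hckR k).1, (hckR k).2⟩
      have hb : bk k ∈ Finset.Icc 1 Nn :=
        Finset.mem_Icc.mpr ⟨(hbkR k).1, (hbkR k).2⟩
      rw [if_pos hc, if_pos hb]
    have hLmono : StrictMono L := by
      apply strictMono_nat_of_lt_succ
      intro k
      rw [hLstep k]
      have := hbck k
      omega
    -- pigeonhole on restricted weights
    have hfin : (Set.univ.pi (fun a : (Finset.Icc 1 Nn : Finset ℕ) =>
        {c : ℂ | (op ρ false a.1 a.1 0).HasEigenvalue c})).Finite :=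
      Set.Finite.pi (fun a => eigenvalues_finite _)
    set rfn : ℕ → ((Finset.Icc 1 Nn : Finset ℕ) → ℂ) :=
      fun n a => (seq n).1 a.1 with hrfn
    have hmem : ∀ n, rfn n ∈ Set.univ.pi (fun a : (Finset.Icc 1 Nn : Finset ℕ) =>
        {c : ℂ | (op ρ false a.1 a.1 0).HasEigenvalue c}) := by
      intro n
      rw [Set.mem_univ_pi]
      intro a
      obtain ⟨v, hv⟩ := (seq n).2
      have ha : inR Nn a.1 := by
        have := a.2
        rw [Finset.mem_Icc] at this
        exact ⟨this.1, this.2⟩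
      exact Module.End.hasEigenvalue_of_hasEigenvector
        ⟨Module.End.mem_eigenspace_iff.mpr (hv.2 a.1 ha), hv.1⟩
    have hkey : ∀ n m' : ℕ, n < m' → rfn n ≠ rfn m' := by
      intro n m' hlt heq
      have hexp : ∀ a, inR Nn a → expn n a = expn m' a := by
        intro a ha
        have h1 : (seq n).1 a = (seq m').1 a :=
          congrFun heq ⟨a, Finset.mem_Icc.mpr ⟨ha.1, ha.2⟩⟩
        rw [hval n a ha, hval m' a ha] at h1
        have hμ0ne : μ₀ a ≠ 0 := wt_val_ne ρ hq0 hμ₀ ha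
        have h2 : (q : ℂ) ^ expn n a = q ^ expn m' a := mul_right_cancel₀ hμ0ne h1
        have h3 : q ^ (expn n a - expn m' a) = 1 := by
          rw [zpow_sub₀ hq0, h2, div_self (zpow_ne_zero _ hq0)]
        have := zpow_eq_one_iff hq0 hqru _ h3
        omega
      have hLeq : L n = L m' := by
        apply Finset.sum_congr rfl
        intro a hma
        rw [Finset.mem_Icc] at hma
        rw [hexp a ⟨hma.1, hma.2⟩]
      exact absurd hLeq (ne_of_lt (hLmono hlt))
    have hninj : ¬ Function.Injective rfn := by
      intro hinj
      exact absurd hfin (Set.infinite_of_injective_forall_mem hinj hmem)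
    rw [Function.not_injective_iff] at hninj
    obtain ⟨n, m', heq, hnm⟩ := hninj
    rcases hnm.lt_or_gt with h | h
    · exact hkey n m' h heq
    · exact hkey m' n h heq.symm
  -- Step 4: the highest weight space
  obtain ⟨μs, hμsWt, hμssink⟩ := hsink
  obtain ⟨vs, hvs⟩ := hμsWt
  set V1 : Submodule ℂ V := ⨅ (a : ℕ), ⨅ (_ : inR Nn a),
    Module.End.eigenspace (op ρ false a a 0) (μs a) with hV1
  have hV1mem : ∀ v : V, v ∈ V1 ↔ ∀ a, inR Nn a → op ρ false a a 0 v = μs a • v := by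
    intro v
    simp only [hV1, Submodule.mem_iInf]
    constructor
    · intro h a ha
      exact Module.End.mem_eigenspace_iff.mp (h a ha)
    · intro h a ha
      exact Module.End.mem_eigenspace_iff.mpr (h a ha)
  have hvsV1 : vs ∈ V1 := (hV1mem vs).mpr hvs.2
  have hkillV1 : ∀ v ∈ V1, KillsRaisers ρ v := by
    intro v hvV1 g b c z hbc hb hc
    by_cases hv0 : v = 0
    · rw [hv0, map_zero]
    · have hWtv : IsWt ρ μs v := ⟨hv0, (hV1mem v).mp hvV1⟩
      rcases wt_shift ρ hq0 hWtv g hb hc z with h | h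
      · exact h
      · exact absurd ⟨_, h⟩ (hμssink b c hb hc hbc)
  have hinvV1 : ∀ (g : Bool) (p : ℕ) (z : ℤ), ∀ v ∈ V1, op ρ g p p z v ∈ V1 := by
    intro g p z v hvV1
    rw [hV1mem]
    intro a ha
    by_cases hp : inR Nn p
    · have h := weight_comm ρ g ha hp hp z v
      have hs : (if a = p then qp q s a else 1) ≠ 0 := by
        split
        · exact qp_ne hq0 a
        · exact one_ne_zero
      have h2 : op ρ false a a 0 (op ρ g p p z v)
          = op ρ g p p z (op ρ false a a 0 v) := smul_right_injective V hs h
      rw [h2, (hV1mem v).mp hvV1 a ha, map_smul]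
    · have h0 : op ρ g p p z = 0 := op_out ρ (by tauto) g z
      rw [h0]
      simp
  -- Step 5: common eigenvector of the diagonal operators on V1
  set Fr : Bool × ℕ × ℤ → Module.End ℂ V1 :=
    fun x => (op ρ x.1 x.2.1 x.2.1 x.2.2).restrict
      (fun v hv => hinvV1 x.1 x.2.1 x.2.2 v hv) with hFr
  have hFrcomm : ∀ i j : Bool × ℕ × ℤ, Commute (Fr i) (Fr j) := by
    intro i j
    apply LinearMap.ext
    intro v
    apply Subtype.ext
    simp only [Module.End.mul_apply, hFr, LinearMap.restrict_coe_apply]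
    exact diag_comm_all ρ hq0 (hkillV1 v.1 v.2) i.1 j.1 i.2.1 j.2.1 i.2.2 j.2.2
  haveI : Nontrivial V1 := Submodule.nontrivial_iff_ne_bot.mpr (by
    intro h
    rw [Submodule.eq_bot_iff] at h
    exact hvs.1 (h vs hvsV1))
  obtain ⟨w, -, hwne, hwev⟩ := commFamily_eigenvector Fr hFrcomm ⊤
    (by
      intro h
      obtain ⟨x, y, hxy⟩ := exists_pair_ne V1
      apply hxy
      have hx : x ∈ (⊥ : Submodule ℂ ↥V1) := by rw [← h]; exact Submodule.mem_top
      have hy : y ∈ (⊥ : Submodule ℂ ↥V1) := by rw [← h]; exact Submodule.mem_top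
      rw [Submodule.mem_bot] at hx hy
      rw [hx, hy])
    (fun i v _ => Submodule.mem_top)
  -- Step 6: conclusion
  set ζ : V := (w : V) with hζ
  have hζne : ζ ≠ 0 := fun h => hwne (Subtype.ext h)
  refine ⟨ζ, hζne,
    fun i r => Classical.choose (hwev (false, i, -(r : ℤ))),
    fun i r => Classical.choose (hwev (true, i, (r : ℤ))), ?_, ?_, ?_⟩
  · intro i j r h1i hij hjN
    have hiR : inR Nn i := ⟨h1i, by omega⟩
    have hjR : inR Nn j := ⟨by omega, hjN⟩
    constructor
    · rw [AT_op]
      exact hkillV1 ζ w.2 false i j _ hij hiR hjR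
    · rw [AB_op]
      exact hkillV1 ζ w.2 true i j _ hij hiR hjR
  · intro i r h1i hiN
    constructor
    · rw [AT_op]
      have h := Classical.choose_spec (hwev (false, i, -(r : ℤ)))
      have h2 := congrArg (Subtype.val) h
      simpa only [hFr, LinearMap.restrict_coe_apply, Submodule.coe_smul] using h2
    · rw [AB_op]
      have h := Classical.choose_spec (hwev (true, i, (r : ℤ)))
      have h2 := congrArg (Subtype.val) h
      simpa only [hFr, LinearMap.restrict_coe_apply, Submodule.coe_smul] using h2
  · -- surjectivity via irreducibility
    set φ : UA Nn q s →ₗ[ℂ] V :=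
      { toFun := fun x => ρ x ζ
        map_add' := fun x y => by
          show ρ (x + y) ζ = ρ x ζ + ρ y ζ
          rw [map_add, LinearMap.add_apply]
        map_smul' := fun c x => by
          show ρ (c • x) ζ = c • ρ x ζ
          rw [map_smul, LinearMap.smul_apply] } with hφ
    have hrange := hirr (LinearMap.range φ) (by
      rintro x wv ⟨y, rfl⟩
      exact ⟨x * y, by
        show ρ (x * y) ζ = ρ x (ρ y ζ)
        rw [map_mul, Module.End.mul_apply]⟩)
    rcases hrange with h | h
    · exfalso
      have hζmem : ζ ∈ LinearMap.range φ := ⟨1, by simp [hφ]⟩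
      rw [h, Submodule.mem_bot] at hζmem
      exact hζne hζmem
    · intro v
      have hv : v ∈ LinearMap.range φ := h ▸ Submodule.mem_top
      obtain ⟨x, hx⟩ := hv
      exact ⟨x, hx⟩
end
end Stmt14
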